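/- arXiv:0803.0073 — 3 statements merged into one kernel-verified Lean document; each statement's English description precedes it below -/
import Mathlib

section
/- Under the hypotheses that A^T + {a − T a : a ∈ A} is dense in A and P(n) → 0, the positive projection E_T : A → A^T with E_T ∘ T = T ∘ E_T = E_T is unique: any positive linear projection Ẽ of A onto A^T satisfying Ẽ ∘ T = Ẽ equals E_T. -/
open Filter Topology Complex

lemma continuous_of_positive_linear' {A : Type*} [CStarAlgebra A] [PartialOrder A]
    [StarOrderedRing A] (f : A →ₗ[ℂ] A) (hf : ∀ a : A, 0 ≤ a → 0 ≤ f a) :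
    Continuous f := by
  set C := ‖f 1‖ with hC
  have hone : ‖(1 : A)‖ ≤ 1 := by
    rcases subsingleton_or_nontrivial A with h | h
    · simp [Subsingleton.elim (1 : A) 0]
    · simp [CStarRing.norm_one]
  have hpos : ∀ a : A, 0 ≤ a → ‖f a‖ ≤ ‖a‖ * C := by
    intro a ha
    have h1 : a ≤ ‖a‖ • (1 : A) := by
      simpa [Algebra.algebraMap_eq_smul_one] using
        IsSelfAdjoint.le_algebraMap_norm_self (IsSelfAdjoint.of_nonneg ha)
    have h2 : f a ≤ ‖a‖ • f 1 := by
      have := hf _ (sub_nonneg.2 h1)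
      rw [map_sub, LinearMap.map_smul_of_tower] at this
      exact sub_nonneg.1 this
    calc ‖f a‖ ≤ ‖(‖a‖ : ℝ) • f 1‖ :=
          CStarAlgebra.norm_le_norm_of_nonneg_of_le (hf a ha) h2
      _ = ‖a‖ * C := by rw [norm_smul, Real.norm_of_nonneg (norm_nonneg a)]
  have hsa : ∀ a : A, IsSelfAdjoint a → ‖f a‖ ≤ 3 * C * ‖a‖ := by
    intro a ha
    have hCnn : 0 ≤ C := hC ▸ norm_nonneg (f 1)
    have h1 : (0 : A) ≤ ‖a‖ • (1 : A) + a := by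
      have h := ha.neg_algebraMap_norm_le_self
      rw [Algebra.algebraMap_eq_smul_one] at h
      calc (0 : A) = ‖a‖ • 1 + -(‖a‖ • (1 : A)) := by abel
        _ ≤ ‖a‖ • 1 + a := add_le_add le_rfl h
    have hb : ‖(‖a‖ • (1 : A) + a)‖ ≤ 2 * ‖a‖ := by
      calc ‖(‖a‖ • (1 : A) + a)‖ ≤ ‖(‖a‖ : ℝ) • (1 : A)‖ + ‖a‖ := norm_add_le _ _
        _ ≤ 2 * ‖a‖ := by
            rw [norm_smul, Real.norm_of_nonneg (norm_nonneg a)]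
            nlinarith [norm_nonneg a]
    have key : f a = f (‖a‖ • (1 : A) + a) - ‖a‖ • f 1 := by
      rw [map_add, LinearMap.map_smul_of_tower]; abel
    calc ‖f a‖ ≤ ‖f (‖a‖ • (1 : A) + a)‖ + ‖(‖a‖ : ℝ) • f 1‖ := by
          rw [key]; exact norm_sub_le _ _
      _ ≤ 2 * ‖a‖ * C + ‖a‖ * C := by
          gcongr ?_ + ?_
          · exact le_trans (hpos _ h1) (by nlinarith)
          · rw [norm_smul, Real.norm_of_nonneg (norm_nonneg a)]
      _ = 3 * C * ‖a‖ := by ring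
  have hCnn : 0 ≤ C := hC ▸ norm_nonneg (f 1)
  apply AddMonoidHomClass.continuous_of_bound f (12 * C)
  intro a
  have hre : ‖(realPart a : A)‖ ≤ ‖a‖ := by
    rw [realPart_apply_coe]
    calc ‖(2 : ℝ)⁻¹ • (a + star a)‖ = 2⁻¹ * ‖a + star a‖ := by
          rw [norm_smul, Real.norm_of_nonneg (by norm_num : (0:ℝ) ≤ 2⁻¹)]
      _ ≤ 2⁻¹ * (‖a‖ + ‖star a‖) := by gcongr; exact norm_add_le _ _
      _ = ‖a‖ := by rw [norm_star]; ring
  have him : ‖(imaginaryPart a : A)‖ ≤ ‖a‖ := by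
    rw [imaginaryPart_apply_coe]
    calc ‖(-I) • (2 : ℝ)⁻¹ • (a - star a)‖ = 2⁻¹ * ‖a - star a‖ := by
          rw [norm_smul, norm_smul, Real.norm_of_nonneg (by norm_num : (0:ℝ) ≤ 2⁻¹)]
          simp
      _ ≤ 2⁻¹ * (‖a‖ + ‖star a‖) := by gcongr; exact norm_sub_le _ _
      _ = ‖a‖ := by rw [norm_star]; ring
  calc ‖f a‖ = ‖f (realPart a : A) + I • f (imaginaryPart a : A)‖ := by
        conv_lhs => rw [← realPart_add_I_smul_imaginaryPart a]
        rw [map_add, map_smul]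
    _ ≤ ‖f (realPart a : A)‖ + ‖I • f (imaginaryPart a : A)‖ := norm_add_le _ _
    _ ≤ 3 * C * ‖a‖ + 3 * C * ‖a‖ := by
        gcongr ?_ + ?_
        · exact le_trans (hsa _ (realPart a).2) (by nlinarith [norm_nonneg (realPart a : A)])
        · rw [norm_smul, Complex.norm_I, one_mul]
          exact le_trans (hsa _ (imaginaryPart a).2) (by nlinarith [norm_nonneg (imaginaryPart a : A)])
    _ ≤ 12 * C * ‖a‖ := by nlinarith [norm_nonneg a]

/-- Under the density and `P(n) → 0` hypotheses, the projection `E_T` obtained as the norm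
limit of the Riesz means of the iterates of `T` is the unique positive `T`-invariant
projection onto the fixed point subspace: any positive linear projection `Ẽ` of `A` onto
`A^T` with `Ẽ ∘ T = Ẽ` equals `E_T`. -/
theorem invariant_projection_unique {A : Type*} [CStarAlgebra A] [PartialOrder A]
    [StarOrderedRing A]
    (T : A →ₗ[ℂ] A) (hTpos : ∀ a : A, 0 ≤ a → 0 ≤ T a) (hT1 : T 1 = 1)
    (p : ℕ → ℝ) (hp1 : 0 < p 1) (hpnonneg : ∀ k, 0 ≤ p k)
    (hP : Tendsto (fun n : ℕ =>
        (p 1 + ∑ k ∈ Finset.Icc 2 n, |p k - p (k - 1)| + p n) /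
          ∑ k ∈ Finset.Icc 1 n, p k) atTop (nhds 0))
    (hdense : Dense {y : A | ∃ f, T f = f ∧ ∃ a, y = f + (a - T a)})
    (E : A →L[ℂ] A)
    (hE : ∀ x, Tendsto (fun n : ℕ =>
        (∑ k ∈ Finset.Icc 1 n, p k)⁻¹ • ∑ k ∈ Finset.Icc 1 n, p k • (T ^ k) x)
      atTop (nhds (E x)))
    (hErange : ∀ x, T (E x) = E x) (hEfix : ∀ x, T x = x → E x = x)
    (Etilde : A →ₗ[ℂ] A) (hEtpos : ∀ a : A, 0 ≤ a → 0 ≤ Etilde a)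
    (hEtrange : ∀ x, T (Etilde x) = Etilde x) (hEtfix : ∀ x, T x = x → Etilde x = x)
    (hEtinv : ∀ x, Etilde (T x) = Etilde x) :
    ∀ x, Etilde x = E x := by
  intro x
  have hcont : Continuous Etilde := continuous_of_positive_linear' Etilde hEtpos
  have hpow : ∀ (k : ℕ) (y : A), Etilde ((T ^ k) y) = Etilde y := by
    intro k
    induction k with
    | zero => intro y; simp
    | succ n ih =>
        intro y
        rw [pow_succ, Module.End.mul_apply, ih, hEtinv]
  have heq : ∀ᶠ n in atTop, Etilde
      ((∑ k ∈ Finset.Icc 1 n, p k)⁻¹ • ∑ k ∈ Finset.Icc 1 n, p k • (T ^ k) x)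
        = Etilde x := by
    filter_upwards [eventually_ge_atTop 1] with n hn
    have hsumpos : 0 < ∑ k ∈ Finset.Icc 1 n, p k :=
      lt_of_lt_of_le hp1 <| Finset.single_le_sum (fun i _ => hpnonneg i)
        (Finset.mem_Icc.2 ⟨le_refl 1, hn⟩)
    rw [LinearMap.map_smul_of_tower, map_sum]
    have : ∀ k ∈ Finset.Icc 1 n, Etilde (p k • (T ^ k) x) = p k • Etilde x := by
      intro k _
      rw [LinearMap.map_smul_of_tower, hpow]
    rw [Finset.sum_congr rfl this, ← Finset.sum_smul, smul_smul,
      inv_mul_cancel₀ hsumpos.ne', one_smul]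
  have h1 : Tendsto (fun n : ℕ => Etilde
      ((∑ k ∈ Finset.Icc 1 n, p k)⁻¹ • ∑ k ∈ Finset.Icc 1 n, p k • (T ^ k) x))
      atTop (nhds (Etilde (E x))) := (hcont.tendsto _).comp (hE x)
  have h2 : Tendsto (fun _ : ℕ => Etilde x) atTop (nhds (Etilde (E x))) :=
    h1.congr' heq
  have := tendsto_nhds_unique h2 tendsto_const_nhds
  rw [← this]; exact hEtfix _ (hErange x)
end

section
/- Let Π be a d × d stochastic matrix and Ψ the associated diagonal-entangled Markov operator on M_d(ℂ) (Ψ(x)_{ii} = ∑_{k,l} √(p_{ik} p_{il}) x_{kl}, off-diagonal entries 0). Then M_d(ℂ)^Ψ + {x − Ψ(x) : x ∈ M_d(ℂ)} = M_d(ℂ); i.e. every matrix x decomposes as x = x_ψ + (y − Ψ y) with x_ψ = diag(ψ) for some ψ with Π ψ = ψ and some y ∈ M_d(ℂ). -/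
open Matrix Finset

/-- Mean ergodic decomposition for a (complexified) stochastic matrix. -/
theorem stochastic_ker_sup_range (d : ℕ) (Pmat : Matrix (Fin d) (Fin d) ℝ)
    (hnonneg : ∀ i j, 0 ≤ Pmat i j) (hrow : ∀ i, ∑ j, Pmat i j = 1) :
    LinearMap.ker (1 - (Pmat.map Complex.ofReal).mulVecLin) ⊔
      LinearMap.range (1 - (Pmat.map Complex.ofReal).mulVecLin) = ⊤ := by
  classical
  set A : Matrix (Fin d) (Fin d) ℂ := Pmat.map Complex.ofReal with hA
  set L : (Fin d → ℂ) →ₗ[ℂ] (Fin d → ℂ) := A.mulVecLin with hL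
  have hbound : ∀ (M : ℝ) (v : Fin d → ℂ), (∀ j, ‖v j‖ ≤ M) →
      ∀ i, ‖L v i‖ ≤ M := by
    intro M v hv i
    have hLv : L v i = ∑ j, (Pmat i j : ℂ) * v j := by
      simp [hL, hA, Matrix.mulVecLin_apply, Matrix.mulVec, dotProduct, Matrix.map_apply]
    rw [hLv]
    calc ‖∑ j, (Pmat i j : ℂ) * v j‖
        ≤ ∑ j, ‖(Pmat i j : ℂ) * v j‖ := by
          exact norm_sum_le _ _
      _ = ∑ j, Pmat i j * ‖v j‖ := by
          refine Finset.sum_congr rfl fun j _ => ?_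
          rw [norm_mul, Complex.norm_real, Real.norm_eq_abs, abs_of_nonneg (hnonneg i j)]
      _ ≤ ∑ j, Pmat i j * M := by
          refine Finset.sum_le_sum fun j _ => ?_
          exact mul_le_mul_of_nonneg_left (hv j) (hnonneg i j)
      _ = M := by rw [← Finset.sum_mul, hrow, one_mul]
  have hinf : LinearMap.ker (1 - L) ⊓ LinearMap.range (1 - L) = ⊥ := by
    rw [eq_bot_iff]
    rintro v hv
    obtain ⟨hker, w, rfl⟩ := hv
    set v := (1 - L) w with hvdef
    have hLv : L v = v := by
      have : v - L v = 0 := hker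
      have := sub_eq_zero.mp this
      exact this.symm
    have hLw : L w = w - v := by
      have : v = w - L w := by simp [hvdef, LinearMap.sub_apply]
      rw [this]; abel
    set M : ℝ := ∑ j, ‖w j‖ with hM
    have hwM : ∀ j, ‖w j‖ ≤ M := fun j =>
      Finset.single_le_sum (fun k _ => (norm_nonneg (w k))) (Finset.mem_univ j)
    have hpow : ∀ n : ℕ, ∀ i, ‖(L ^ n) w i‖ ≤ M := by
      intro n
      induction n with
      | zero => simpa using hwM
      | succ n ih =>
        intro i
        have : (L ^ (n + 1)) w = L ((L ^ n) w) := by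
          rw [pow_succ']; rfl
        rw [this]
        exact hbound M _ ih i
    have hlin : ∀ n : ℕ, (L ^ n) w = w - (n : ℂ) • v := by
      intro n
      induction n with
      | zero => simp
      | succ n ih =>
        have h1 : (L ^ (n + 1)) w = L ((L ^ n) w) := by rw [pow_succ']; rfl
        rw [h1, ih, map_sub, _root_.map_smul, hLv, hLw]
        push_cast
        module
    have hkey : ∀ n : ℕ, ∀ i, (n : ℝ) * ‖v i‖ ≤ 2 * M := by
      intro n i
      have h1 : (n : ℂ) • v = w - (L ^ n) w := by rw [hlin n]; abel
      have h2 : ((n : ℂ) • v) i = (n : ℂ) * v i := rfl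
      have h3 : ‖(n : ℂ) * v i‖ = (n : ℝ) * ‖v i‖ := by
        rw [norm_mul]; norm_num
      have h4 : ((n : ℂ) • v) i = w i - (L ^ n) w i := by rw [h1]; rfl
      calc (n : ℝ) * ‖v i‖ = ‖((n : ℂ) • v) i‖ := by
              rw [h2, h3]
        _ = ‖w i - (L ^ n) w i‖ := by rw [h4]
        _ ≤ ‖w i‖ + ‖(L ^ n) w i‖ := by
              rw [sub_eq_add_neg]
              refine (norm_add_le _ _).trans ?_
              rw [norm_neg]
        _ ≤ M + M := add_le_add (hwM i) (hpow n i)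
        _ = 2 * M := by ring
    have hv0 : v = 0 := by
      funext i
      by_contra h
      have hpos : 0 < ‖v i‖ := norm_pos_iff.mpr h
      obtain ⟨n, hn⟩ := exists_nat_gt (2 * M / ‖v i‖)
      have := hkey n i
      rw [div_lt_iff₀ hpos] at hn
      linarith
    simp [hv0]
  apply Submodule.eq_top_of_finrank_eq
  have h1 := Submodule.finrank_sup_add_finrank_inf_eq
    (LinearMap.ker (1 - L)) (LinearMap.range (1 - L))
  have h2 := LinearMap.finrank_range_add_finrank_ker (1 - L)
  rw [hinf, finrank_bot] at h1
  omega

/-- For the diagonal-entangled Markov operator `Ψ` associated to a stochastic matrix `Pmat`,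
every matrix `x` decomposes as `x = diag ψ + (y - Ψ y)` with `Pmat ψ = ψ`; that is,
`M_d(ℂ)^Ψ + {x - Ψ x} = M_d(ℂ)`. -/
theorem entangled_markov_decomposition (d : ℕ) (Pmat : Matrix (Fin d) (Fin d) ℝ)
    (hnonneg : ∀ i j, 0 ≤ Pmat i j) (hrow : ∀ i, ∑ j, Pmat i j = 1)
    (Ψ : Matrix (Fin d) (Fin d) ℂ → Matrix (Fin d) (Fin d) ℂ)
    (hΨ : ∀ x i j, Ψ x i j =
      if i = j then ∑ k, ∑ l, (Real.sqrt (Pmat i k * Pmat i l) : ℂ) * x k l else 0) :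
    ∀ x : Matrix (Fin d) (Fin d) ℂ, ∃ (ψ : Fin d → ℂ) (y : Matrix (Fin d) (Fin d) ℂ),
      (Pmat.map (Complex.ofReal)).mulVec ψ = ψ ∧
      x = Matrix.diagonal ψ + (y - Ψ y) := by
  classical
  intro x
  set A : Matrix (Fin d) (Fin d) ℂ := Pmat.map Complex.ofReal with hA
  set L : (Fin d → ℂ) →ₗ[ℂ] (Fin d → ℂ) := A.mulVecLin with hL
  set c : Fin d → ℂ := fun i => ∑ k, ∑ l,
    (if k = l then 0 else (Real.sqrt (Pmat i k * Pmat i l) : ℂ) * x k l) with hc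
  set b : Fin d → ℂ := fun i => x i i + c i with hb
  have htop := stochastic_ker_sup_range d Pmat hnonneg hrow
  have hbmem : b ∈ LinearMap.ker (1 - L) ⊔ LinearMap.range (1 - L) := by
    rw [htop]; trivial
  obtain ⟨ψ, hψ, z, hz, hψz⟩ := Submodule.mem_sup.mp hbmem
  obtain ⟨ξ, rfl⟩ := hz
  have hψfix : L ψ = ψ := by
    have : ψ - L ψ = 0 := hψ
    exact (sub_eq_zero.mp this).symm
  refine ⟨ψ, Matrix.diagonal ξ + Matrix.of (fun k l => if k = l then 0 else x k l), ?_, ?_⟩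
  · exact hψfix
  · set y : Matrix (Fin d) (Fin d) ℂ :=
      Matrix.diagonal ξ + Matrix.of (fun k l => if k = l then 0 else x k l) with hy
    funext i j
    by_cases hij : i = j
    · subst hij
      have hyd : ∀ k, y k k = ξ k := fun k => by
        simp [hy, Matrix.add_apply]
      have hyo : ∀ k l, k ≠ l → y k l = x k l := fun k l h => by
        simp [hy, Matrix.add_apply, Matrix.diagonal_apply_ne _ h, h]
      have hΨy : Ψ y i i = (L ξ) i + c i := by
        rw [hΨ y i i, if_pos rfl]
        have hsplit : ∀ k l : Fin d, (Real.sqrt (Pmat i k * Pmat i l) : ℂ) * y k l =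
            (Real.sqrt (Pmat i k * Pmat i l) : ℂ) * (Matrix.diagonal ξ k l) +
            (if k = l then 0 else (Real.sqrt (Pmat i k * Pmat i l) : ℂ) * x k l) := by
          intro k l
          by_cases hkl : k = l
          · subst hkl
            rw [hyd k]
            simp [Matrix.diagonal_apply_eq]
          · rw [hyo k l hkl]
            simp [Matrix.diagonal_apply_ne _ hkl, hkl]
        have : ∑ k, ∑ l, (Real.sqrt (Pmat i k * Pmat i l) : ℂ) * y k l =
            (∑ k, ∑ l, (Real.sqrt (Pmat i k * Pmat i l) : ℂ) * (Matrix.diagonal ξ k l)) +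
            c i := by
          rw [hc, ← Finset.sum_add_distrib]
          refine Finset.sum_congr rfl fun k _ => ?_
          rw [← Finset.sum_add_distrib]
          exact Finset.sum_congr rfl fun l _ => hsplit k l
        rw [this]
        congr 1
        have : ∀ k : Fin d, ∑ l, (Real.sqrt (Pmat i k * Pmat i l) : ℂ) *
            (Matrix.diagonal ξ k l) = (Pmat i k : ℂ) * ξ k := by
          intro k
          rw [Finset.sum_eq_single k]
          · rw [Matrix.diagonal_apply_eq, Real.sqrt_mul_self (hnonneg i k)]
          · intro l _ hlk
            rw [Matrix.diagonal_apply_ne _ (Ne.symm hlk), mul_zero]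
          · intro h; exact absurd (Finset.mem_univ k) h
        rw [Finset.sum_congr rfl fun k _ => this k]
        simp [hL, hA, Matrix.mulVecLin_apply, Matrix.mulVec, dotProduct, Matrix.map_apply]
      have hbi : ψ i + (ξ i - (L ξ) i) = x i i + c i := by
        have := congrFun hψz i
        simpa [hb, LinearMap.sub_apply] using this
      simp only [Matrix.add_apply, Matrix.sub_apply, Matrix.diagonal_apply_eq, hyd i, hΨy]
      have hg : x i i = ψ i + (ξ i - ((L ξ) i + c i)) := by
        linear_combination -hbi
      exact hg
    · have : Ψ y i j = 0 := by rw [hΨ y i j, if_neg hij]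
      rw [Matrix.add_apply, Matrix.sub_apply, this]
      simp [Matrix.add_apply, Matrix.sub_apply, Matrix.diagonal_apply_ne _ hij, this,
        hy, hij]
end

section
/- Let Π₀ = [[1,0,0],[0,0,1],[0,u,v]] with u,v ≥ 0, u + v = 1, u > 0, and let Ψ₀ be the associated diagonal-entangled Markov operator on M₃(ℂ). Then the fixed point subspace M₃(ℂ)^{Ψ₀} = {diag(x, y, y) : x, y ∈ ℂ} is a 2-dimensional commutative unital *-subalgebra of M₃(ℂ); in particular Ψ₀ admits more than one invariant state, so Ψ₀ is not uniquely ergodic (not ergodic), even though M₃(ℂ)^{Ψ₀} + {x − Ψ₀ x} = M₃(ℂ). -/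
open scoped ComplexOrder

/-- For `Π₀ = [[1,0,0],[0,0,1],[0,u,v]]` (`u,v ≥ 0`, `u+v=1`, `u>0`) and the associated
diagonal-entangled Markov operator `Ψ₀` on `M₃(ℂ)`, the fixed point subspace is
`{diag(x,y,y)}`, a commutative unital *-subalgebra; `M₃(ℂ)^{Ψ₀} + {x - Ψ₀ x} = M₃(ℂ)`, yet
`Ψ₀` admits two distinct invariant states, hence is not uniquely ergodic (not ergodic). -/
theorem entangled_markov_uniquely_ergodic_relative_not_ergodic
    (u v : ℝ) (hu : 0 ≤ u) (hv : 0 ≤ v) (huv : u + v = 1) (hupos : 0 < u)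
    (P0 : Matrix (Fin 3) (Fin 3) ℝ)
    (hP0 : P0 = Matrix.of ![![1, 0, 0], ![0, 0, 1], ![0, u, v]])
    (Ψ : Matrix (Fin 3) (Fin 3) ℂ → Matrix (Fin 3) (Fin 3) ℂ)
    (hΨ : ∀ x i j, Ψ x i j =
      if i = j then ∑ k, ∑ l, (Real.sqrt (P0 i k * P0 i l) : ℂ) * x k l else 0) :
    (∀ x : Matrix (Fin 3) (Fin 3) ℂ, Ψ x = x ↔
      ∃ a b : ℂ, x = Matrix.diagonal ![a, b, b]) ∧
    (∀ a b a' b' : ℂ,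
      Matrix.diagonal ![a, b, b] * Matrix.diagonal ![a', b', b'] =
        Matrix.diagonal ![a * a', b * b', b * b'] ∧
      Matrix.diagonal ![a, b, b] * Matrix.diagonal ![a', b', b'] =
        Matrix.diagonal ![a', b', b'] * Matrix.diagonal ![a, b, b] ∧
      star (Matrix.diagonal ![a, b, b]) =
        Matrix.diagonal ![star a, star b, star b]) ∧
    ((1 : Matrix (Fin 3) (Fin 3) ℂ) = Matrix.diagonal ![1, 1, 1]) ∧
    (∀ x : Matrix (Fin 3) (Fin 3) ℂ, ∃ (a b : ℂ) (y : Matrix (Fin 3) (Fin 3) ℂ),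
      x = Matrix.diagonal ![a, b, b] + (y - Ψ y)) ∧
    (∃ φ₁ φ₂ : Matrix (Fin 3) (Fin 3) ℂ →ₗ[ℂ] ℂ,
      φ₁ 1 = 1 ∧ φ₂ 1 = 1 ∧
      (∀ x, x.PosSemidef → 0 ≤ φ₁ x) ∧ (∀ x, x.PosSemidef → 0 ≤ φ₂ x) ∧
      (∀ x, φ₁ (Ψ x) = φ₁ x) ∧ (∀ x, φ₂ (Ψ x) = φ₂ x) ∧
      φ₁ ≠ φ₂) := by
  subst hP0
  have h3 : ∀ i : Fin 3, i = 0 ∨ i = 1 ∨ i = 2 := by decide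
  -- entrywise description of Ψ
  have h00 : ∀ x : Matrix (Fin 3) (Fin 3) ℂ, Ψ x 0 0 = x 0 0 := by
    intro x; rw [hΨ]
    simp [Fin.sum_univ_three, Real.sqrt_mul_self hu, Real.sqrt_mul_self hv, mul_comm v u]
  have h11 : ∀ x : Matrix (Fin 3) (Fin 3) ℂ, Ψ x 1 1 = x 2 2 := by
    intro x; rw [hΨ]
    simp [Fin.sum_univ_three, Real.sqrt_mul_self hu, Real.sqrt_mul_self hv, mul_comm v u]
  have h22 : ∀ x : Matrix (Fin 3) (Fin 3) ℂ,
      Ψ x 2 2 = (u:ℂ) * x 1 1 + (Real.sqrt (u*v) : ℂ) * (x 1 2 + x 2 1) + (v:ℂ) * x 2 2 := by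
    intro x; rw [hΨ]
    simp [Fin.sum_univ_three, Real.sqrt_mul_self hu, Real.sqrt_mul_self hv, mul_comm v u]
    push_cast [Real.sqrt_mul hu]
    ring
  have hoff : ∀ (x : Matrix (Fin 3) (Fin 3) ℂ) (i j : Fin 3), i ≠ j → Ψ x i j = 0 := by
    intro x i j hij; rw [hΨ]; simp [hij]
  have huv' : (u:ℂ) + (v:ℂ) = 1 := by exact_mod_cast congrArg Complex.ofReal huv
  have h1uC : (1 + (u:ℂ)) ≠ 0 := by
    have h := Complex.ofReal_ne_zero.mpr (show (1+u:ℝ) ≠ 0 by positivity)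
    push_cast at h
    exact h
  have hsq : ((Real.sqrt (u*v) : ℝ) : ℂ) = (Real.sqrt u : ℂ) * (Real.sqrt v : ℂ) := by
    push_cast [Real.sqrt_mul hu]; ring
  have hu2 : (u:ℂ) = (Real.sqrt u : ℂ) * (Real.sqrt u : ℂ) := by
    norm_cast; exact (Real.mul_self_sqrt hu).symm
  have hv2 : (v:ℂ) = (Real.sqrt v : ℂ) * (Real.sqrt v : ℂ) := by
    norm_cast; exact (Real.mul_self_sqrt hv).symm
  refine ⟨?_, ?_, ?_, ?_, ?_⟩
  · -- fixed points
    intro x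
    constructor
    · intro hfix
      refine ⟨x 0 0, x 2 2, ?_⟩
      have e11 : x 1 1 = x 2 2 := by rw [← congrFun (congrFun hfix 1) 1, h11]
      ext i j
      rcases eq_or_ne i j with rfl | hij
      · rcases h3 i with rfl|rfl|rfl <;> simp [Matrix.diagonal, e11]
      · have h0 := hoff x i j hij
        rw [congrFun (congrFun hfix i) j] at h0
        rw [h0, Matrix.diagonal_apply_ne _ hij]
    · rintro ⟨a, b, rfl⟩
      ext i j
      rcases eq_or_ne i j with rfl | hij
      · rcases h3 i with rfl|rfl|rfl
        · rw [h00]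
        · rw [h11]; simp [Matrix.diagonal]
        · rw [h22]; simp [Matrix.diagonal]
          linear_combination (b : ℂ) * huv'
      · rw [hoff _ _ _ hij, Matrix.diagonal_apply_ne _ hij]
  · -- diagonal algebra facts
    intro a b a' b'
    refine ⟨?_, ?_, ?_⟩
    · ext i j
      rcases h3 i with rfl|rfl|rfl <;> rcases h3 j with rfl|rfl|rfl <;>
        simp [Matrix.mul_apply, Fin.sum_univ_three, Matrix.diagonal]
    · ext i j
      rcases h3 i with rfl|rfl|rfl <;> rcases h3 j with rfl|rfl|rfl <;>
        simp [Matrix.mul_apply, Fin.sum_univ_three, Matrix.diagonal, mul_comm]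
    · ext i j
      rcases h3 i with rfl|rfl|rfl <;> rcases h3 j with rfl|rfl|rfl <;>
        simp [Matrix.star_apply, Matrix.diagonal]
  · -- identity
    ext i j
    rcases h3 i with rfl|rfl|rfl <;> rcases h3 j with rfl|rfl|rfl <;>
      simp [Matrix.one_apply, Matrix.diagonal]
  · -- M = fixed + range(1 - Ψ)
    intro x
    set s : ℂ := (Real.sqrt (u*v) : ℂ) * (x 1 2 + x 2 1) with hs
    set d : ℂ := (x 1 1 - x 2 2 - s) / (1 + u) with hd
    refine ⟨x 0 0, x 1 1 - d,
      Matrix.of (fun i j => if i = j then (if i = 1 then d else 0) else x i j), ?_⟩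
    set y : Matrix (Fin 3) (Fin 3) ℂ :=
      Matrix.of (fun i j => if i = j then (if i = 1 then d else 0) else x i j) with hy
    have hy00 : y 0 0 = 0 := by simp [hy]
    have hy11 : y 1 1 = d := by simp [hy]
    have hy22 : y 2 2 = 0 := by simp [hy]
    have hy12 : y 1 2 = x 1 2 := by simp [hy]
    have hy21 : y 2 1 = x 2 1 := by simp [hy]
    ext i j
    rcases eq_or_ne i j with rfl | hij
    · rcases h3 i with rfl|rfl|rfl
      · rw [Matrix.add_apply, Matrix.sub_apply, h00]
        simp [Matrix.diagonal]
      · rw [Matrix.add_apply, Matrix.sub_apply, h11, hy11, hy22]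
        simp [Matrix.diagonal]
      · rw [Matrix.add_apply, Matrix.sub_apply, h22, hy11, hy22, hy12, hy21]
        simp only [Matrix.diagonal, Matrix.of_apply, Matrix.cons_val', Matrix.cons_val_zero,
          Matrix.cons_val_one, Matrix.head_cons, Matrix.cons_val_two, Matrix.tail_cons]
        norm_num
        rw [hd, hs]
        field_simp
        ring
    · have hyx : y i j = x i j := by simp [hy, hij]
      simp [Matrix.add_apply, Matrix.sub_apply, Matrix.diagonal_apply_ne _ hij,
        hoff _ _ _ hij, hyx]
  · -- two invariant states
    set c : Fin 3 → ℂ := ![0, (Real.sqrt u : ℂ), (Real.sqrt v : ℂ)] with hc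
    have hstar : star c = c := by
      funext i
      rcases h3 i with rfl|rfl|rfl <;>
        simp [hc, Complex.star_def, Complex.conj_ofReal]
    have expand : ∀ z : Matrix (Fin 3) (Fin 3) ℂ,
        dotProduct (star c) (Matrix.mulVec z c) =
          (u:ℂ) * z 1 1 + (Real.sqrt u : ℂ) * (Real.sqrt v : ℂ) * (z 1 2 + z 2 1)
            + (v:ℂ) * z 2 2 := by
      intro z
      rw [hstar]
      simp [dotProduct, Matrix.mulVec, Fin.sum_univ_three, hc]
      rw [hu2, hv2]
      ring
    refine ⟨{ toFun := fun x => x 0 0,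
              map_add' := fun x y => by simp [Matrix.add_apply],
              map_smul' := fun r x => by simp [Matrix.smul_apply] },
            { toFun := fun x => ((1 + u : ℝ)⁻¹ : ℂ) *
                (dotProduct (star c) (Matrix.mulVec x c) + (u:ℂ) * x 2 2),
              map_add' := fun x y => by
                simp [Matrix.add_mulVec, dotProduct_add, Matrix.add_apply]; ring,
              map_smul' := fun r x => by
                simp [Matrix.smul_mulVec, dotProduct_smul, Matrix.smul_apply,
                  smul_eq_mul]; ring },
            ?_, ?_, ?_, ?_, ?_, ?_, ?_⟩
    · exact Matrix.one_apply_eq 0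
    · simp only [LinearMap.coe_mk, AddHom.coe_mk]
      rw [expand]
      simp only [Matrix.one_apply_eq, Matrix.one_apply_ne (show (1:Fin 3) ≠ 2 by decide),
        Matrix.one_apply_ne (show (2:Fin 3) ≠ 1 by decide)]
      push_cast
      field_simp
      linear_combination huv'
    · intro x hx
      simp only [LinearMap.coe_mk, AddHom.coe_mk]
      show (0:ℂ) ≤ x 0 0
      simpa [dotProduct, Fin.sum_univ_three, Matrix.mulVec, Pi.single_apply]
        using hx.dotProduct_mulVec_nonneg (Pi.single 0 1)
    · intro x hx
      simp only [LinearMap.coe_mk, AddHom.coe_mk]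
      have h1 : (0:ℂ) ≤ dotProduct (star c) (Matrix.mulVec x c) := hx.dotProduct_mulVec_nonneg c
      have h2 : (0:ℂ) ≤ x 2 2 := by
        simpa [dotProduct, Fin.sum_univ_three, Matrix.mulVec, Pi.single_apply]
          using hx.dotProduct_mulVec_nonneg (Pi.single 2 1)
      have hq : (0:ℂ) ≤ (((1 + u : ℝ) : ℂ))⁻¹ := by
        rw [← Complex.ofReal_inv, Complex.zero_le_real]; positivity
      have h4 : (0:ℂ) ≤ (u:ℂ) := by rw [Complex.zero_le_real]; exact hu
      exact mul_nonneg hq (add_nonneg h1 (mul_nonneg h4 h2))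
    · intro x
      exact h00 x
    · intro x
      simp only [LinearMap.coe_mk, AddHom.coe_mk]
      congr 1
      rw [expand, expand, h11, h22, hoff x 1 2 (by decide), hoff x 2 1 (by decide), hsq]
      linear_combination ((u:ℂ) * x 1 1 + (Real.sqrt u : ℂ) * (Real.sqrt v : ℂ)
        * (x 1 2 + x 2 1) + (v:ℂ) * x 2 2) * huv'
    · intro h
      have hh := congrArg
        (fun f : Matrix (Fin 3) (Fin 3) ℂ →ₗ[ℂ] ℂ => f (Matrix.diagonal ![1, 0, 0])) h
      change (Matrix.diagonal ![(1:ℂ), 0, 0]) 0 0 = _ at hh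
      simp only [LinearMap.coe_mk, AddHom.coe_mk] at hh
      rw [expand] at hh
      simp [Matrix.diagonal] at hh
end
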